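/- Let O ⊂ ℝ^{n+1} be bounded open satisfying the interior corkscrew condition, and suppose for every x ∈ ∂O and 0 < r < diam O one has |B(x,r) \ cl(O)| ≥ c r^{n+1}. Then ∂O satisfies the lower ADR bound: H^n(B(x,r) ∩ ∂O) ≥ c' r^n for all x ∈ ∂O, 0 < r < diam O, with c' depending on n, c and the corkscrew constant, via the relative isoperimetric inequality. -/

import Mathlib

open Metric MeasureTheory Set

noncomputable section

open scoped NNReal ENNReal

-- image measure helper
lemma image_measure_eq {α β : Type*} [MeasurableSpace α] [MeasurableSpace β]
    {μ : Measure α} {ν : Measure β} (e : α ≃ᵐ β) (h : MeasurePreserving e μ ν) (A : Set α) :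
    ν (e '' A) = μ A := by
  rw [e.image_eq_preimage_symm]
  exact (h.symm e).measure_preimage_equiv A

-- volume ≤ Hausdorff measure on Euclidean space
lemma volume_le_hausdorff (m : ℕ) (A : Set (EuclideanSpace ℝ (Fin m))) :
    volume A ≤ μH[(m : ℝ)] A := by
  have h1 : volume ((MeasurableEquiv.toLp 2 (Fin m → ℝ)).symm '' A) = volume A :=
    image_measure_eq _ (EuclideanSpace.volume_preserving_symm_measurableEquiv_toLp (Fin m)) A
  have h2 : (volume : Measure (Fin m → ℝ)) = μH[(m : ℝ)] := by
    have := (hausdorffMeasure_pi_real (ι := Fin m)).symm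
    simpa using this
  have hL : LipschitzWith 1 (⇑(MeasurableEquiv.toLp 2 (Fin m → ℝ)).symm) := by
    rw [MeasurableEquiv.coe_toLp_symm]
    exact PiLp.lipschitzWith_ofLp 2 _
  calc volume A = μH[(m:ℝ)] ((MeasurableEquiv.toLp 2 (Fin m → ℝ)).symm '' A) := by
        rw [h1.symm, h2]
    _ ≤ (1:ℝ≥0) ^ (m:ℝ) * μH[(m:ℝ)] A := hL.hausdorffMeasure_image_le (by positivity) A
    _ = μH[(m:ℝ)] A := by simp

-- segment crossing
lemma exists_frontier_mem_segment {E : Type*} [NormedAddCommGroup E] [NormedSpace ℝ E]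
    {O : Set E} (hO : IsOpen O) {y Q : E} (hy : y ∉ O) (hQ : Q ∈ O) :
    ∃ z ∈ segment ℝ y Q, z ∈ frontier O := by
  by_contra h
  push_neg at h
  have hdisj : Disjoint (frontier O) (segment ℝ y Q) :=
    Set.disjoint_right.2 fun z hz hzf => h z hz hzf
  have hclopen := isClopen_preimage_val hO hdisj
  have hpc : PreconnectedSpace (segment ℝ y Q) :=
    Subtype.preconnectedSpace (convex_segment y Q).isPreconnected
  rcases isClopen_iff.mp hclopen with h0 | h1
  · have : (⟨Q, right_mem_segment ℝ y Q⟩ : segment ℝ y Q) ∈ (Subtype.val ⁻¹' O : Set (segment ℝ y Q)) := hQ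
    rw [h0] at this; exact this
  · have : (⟨y, left_mem_segment ℝ y Q⟩ : segment ℝ y Q) ∈ (Subtype.val ⁻¹' O : Set (segment ℝ y Q)) := by
      rw [h1]; trivial
    exact hy this

-- the coordinate-dropping map
def dropLast (m : ℕ) (z : EuclideanSpace ℝ (Fin (m+1))) : EuclideanSpace ℝ (Fin m) :=
  WithLp.toLp 2 (fun j : Fin m => z j.castSucc)

lemma lipschitz_dropLast (m : ℕ) : LipschitzWith 1 (dropLast m) := by
  apply LipschitzWith.of_dist_le_mul
  intro z₁ z₂
  rw [NNReal.coe_one, one_mul, EuclideanSpace.dist_eq, EuclideanSpace.dist_eq]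
  apply Real.sqrt_le_sqrt
  have : ∑ j : Fin m, dist (z₁ j.castSucc) (z₂ j.castSucc) ^ 2
      = ∑ i ∈ Finset.univ.map Fin.castSuccEmb, dist (z₁ i) (z₂ i) ^ 2 := by
    rw [Finset.sum_map]; rfl
  rw [show (∑ j : Fin m, dist (dropLast m z₁ j) (dropLast m z₂ j) ^ 2)
      = ∑ j : Fin m, dist (z₁ j.castSucc) (z₂ j.castSucc) ^ 2 from rfl, this]
  exact Finset.sum_le_sum_of_subset_of_nonneg (Finset.subset_univ _)
    (fun i _ _ => by positivity)

lemma abs_coord_le_norm (m : ℕ) (w : EuclideanSpace ℝ (Fin m)) (i : Fin m) : |w i| ≤ ‖w‖ := by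
  rw [EuclideanSpace.norm_eq]
  rw [show |w i| = Real.sqrt (‖w i‖ ^ 2) by rw [Real.norm_eq_abs, Real.sqrt_sq (abs_nonneg _)]]
  apply Real.sqrt_le_sqrt
  exact Finset.single_le_sum (f := fun j => ‖w j‖ ^ 2) (fun j _ => by positivity) (Finset.mem_univ i)

lemma slab_volume (m : ℕ) (A : Set (EuclideanSpace ℝ (Fin (m+1)))) (a ρ : ℝ)
    (hA : ∀ z ∈ A, |z (Fin.last m) - a| ≤ ρ) :
    volume A ≤ ENNReal.ofReal (2*ρ) * volume (dropLast m '' A) := by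
  set T := toMeasurable volume (dropLast m '' A) with hT
  have hTm : MeasurableSet T := measurableSet_toMeasurable _ _
  set T2 : Set (Fin m → ℝ) := ⇑(MeasurableEquiv.toLp 2 (Fin m → ℝ)).symm '' T with hT2
  have hT2m : MeasurableSet T2 :=
    (MeasurableEquiv.toLp 2 (Fin m → ℝ)).symm.measurableSet_image.2 hTm
  set e1 := (MeasurableEquiv.toLp 2 (Fin (m+1) → ℝ)).symm with he1
  set e2 := MeasurableEquiv.piFinSuccAbove (fun _ : Fin (m+1) => ℝ) (Fin.last m) with he2
  have hmp : MeasurePreserving (⇑e2 ∘ ⇑e1) volume volume :=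
    (volume_preserving_piFinSuccAbove _ _).comp
      (EuclideanSpace.volume_preserving_symm_measurableEquiv_toLp _)
  have hcoe : ∀ (z : EuclideanSpace ℝ (Fin (m+1))) (i : Fin (m+1)), e1 z i = z i := by
    intro z i
    rw [he1, MeasurableEquiv.coe_toLp_symm]
  have hcoe2 : ∀ (w : EuclideanSpace ℝ (Fin m)) (i : Fin m),
      (MeasurableEquiv.toLp 2 (Fin m → ℝ)).symm w i = w i := by
    intro w i
    rw [MeasurableEquiv.coe_toLp_symm]
  have hsub : A ⊆ (⇑e2 ∘ ⇑e1) ⁻¹' ((Icc (a-ρ) (a+ρ)) ×ˢ T2) := by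
    intro z hz
    simp only [mem_preimage, Function.comp_apply, he2,
      MeasurableEquiv.piFinSuccAbove_apply, Fin.insertNthEquiv_symm_apply, mem_prod]
    constructor
    · rw [hcoe]
      have := abs_le.mp (hA z hz)
      exact mem_Icc.mpr ⟨by linarith [this.1], by linarith [this.2]⟩
    · refine ⟨dropLast m z, subset_toMeasurable _ _ ⟨z, hz, rfl⟩, ?_⟩
      funext j
      rw [hcoe2]
      show z j.castSucc = Fin.removeNth (Fin.last m) (e1 z) j
      rw [Fin.removeNth, Fin.succAbove_last, hcoe]
  calc volume A ≤ volume ((⇑e2 ∘ ⇑e1) ⁻¹' (Icc (a-ρ) (a+ρ) ×ˢ T2)) := measure_mono hsub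
    _ = volume (Icc (a-ρ) (a+ρ) ×ˢ T2) :=
        hmp.measure_preimage ((measurableSet_Icc.prod hT2m)).nullMeasurableSet
    _ = ENNReal.ofReal (2*ρ) * volume T2 := by
        rw [MeasureTheory.Measure.volume_eq_prod, Measure.prod_prod, Real.volume_Icc,
          show a + ρ - (a - ρ) = 2*ρ by ring]
    _ = ENNReal.ofReal (2*ρ) * volume (dropLast m '' A) := by
        rw [hT2, image_measure_eq _ (EuclideanSpace.volume_preserving_symm_measurableEquiv_toLp _) T,
          hT, measure_toMeasurable]

lemma exists_unit_net (m : ℕ) {δ : ℝ} (hδ : 0 < δ) (hδ2 : δ ≤ 1/2) :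
    ∃ V : Finset (EuclideanSpace ℝ (Fin (m+1))), V.Nonempty ∧ (∀ v ∈ V, ‖v‖ = 1) ∧
      ∀ w : EuclideanSpace ℝ (Fin (m+1)), ‖w‖ = 1 → ∃ v ∈ V, ‖w - v‖ ≤ 2*δ := by
  have hcomp : IsCompact (sphere (0 : EuclideanSpace ℝ (Fin (m+1))) 1) := isCompact_sphere _ _
  obtain ⟨t, htf, hcov⟩ := (Metric.totallyBounded_iff.mp hcomp.totallyBounded) δ hδ
  classical
  set V : Finset (EuclideanSpace ℝ (Fin (m+1))) :=
    (htf.toFinset.filter (fun u => u ≠ 0)).image (fun u => ‖u‖⁻¹ • u) with hV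
  have hunit : ∀ v ∈ V, ‖v‖ = 1 := by
    intro v hv
    rw [hV] at hv
    obtain ⟨u, hu, rfl⟩ := Finset.mem_image.mp hv
    have hu0 : u ≠ 0 := (Finset.mem_filter.mp hu).2
    rw [norm_smul, norm_inv, norm_norm, inv_mul_cancel₀ (norm_ne_zero_iff.mpr hu0)]
  have hnear : ∀ w : EuclideanSpace ℝ (Fin (m+1)), ‖w‖ = 1 → ∃ v ∈ V, ‖w - v‖ ≤ 2*δ := by
    intro w hw
    have hws : w ∈ sphere (0 : EuclideanSpace ℝ (Fin (m+1))) 1 := by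
      simpa [mem_sphere_zero_iff_norm] using hw
    obtain ⟨u, hu, hwu⟩ := mem_iUnion₂.mp (hcov hws)
    rw [mem_ball] at hwu
    have hwu' : ‖w - u‖ < δ := by rwa [dist_eq_norm] at hwu
    have hun : |‖u‖ - 1| ≤ δ := by
      have h1 := abs_norm_sub_norm_le u w
      rw [hw] at h1
      refine le_trans h1 ?_
      rw [← norm_neg (u - w)]
      simp only [neg_sub]
      exact hwu'.le
    have hu0 : u ≠ 0 := by
      intro h0
      rw [h0, norm_zero] at hun
      rw [abs_of_nonpos (by norm_num)] at hun
      linarith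
    refine ⟨‖u‖⁻¹ • u, ?_, ?_⟩
    · rw [hV]
      exact Finset.mem_image.mpr ⟨u, Finset.mem_filter.mpr ⟨htf.mem_toFinset.mpr hu, hu0⟩, rfl⟩
    · have huv : ‖u - ‖u‖⁻¹ • u‖ = |‖u‖ - 1| := by
        have : u - ‖u‖⁻¹ • u = (1 - ‖u‖⁻¹) • u := by
          rw [sub_smul, one_smul]
        rw [this, norm_smul, Real.norm_eq_abs]
        have hn0 : ‖u‖ ≠ 0 := norm_ne_zero_iff.mpr hu0
        rw [show |1 - ‖u‖⁻¹| * ‖u‖ = |(1 - ‖u‖⁻¹) * ‖u‖| by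
          rw [abs_mul, abs_of_nonneg (norm_nonneg u)]]
        rw [sub_mul, one_mul, inv_mul_cancel₀ hn0, abs_sub_comm]
      calc ‖w - ‖u‖⁻¹ • u‖ ≤ ‖w - u‖ + ‖u - ‖u‖⁻¹ • u‖ := by
            rw [show w - ‖u‖⁻¹ • u = (w - u) + (u - ‖u‖⁻¹ • u) by abel]
            exact norm_add_le _ _
        _ ≤ δ + δ := add_le_add hwu'.le (huv.le.trans hun)
        _ = 2*δ := by ring
  have hne : V.Nonempty := by
    obtain ⟨v, hv, _⟩ := hnear (EuclideanSpace.single 0 1) (by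
      rw [EuclideanSpace.norm_single, norm_one])
    exact ⟨v, hv⟩
  exact ⟨V, hne, hunit, hnear⟩

lemma exists_adapted_basis (m : ℕ) (v : EuclideanSpace ℝ (Fin (m+1))) (hv : ‖v‖ = 1) :
    ∃ b : OrthonormalBasis (Fin (m+1)) ℝ (EuclideanSpace ℝ (Fin (m+1))),
      b (Fin.last m) = v := by
  have hfr : Module.finrank ℝ (EuclideanSpace ℝ (Fin (m+1))) = Fintype.card (Fin (m+1)) := by
    simp [finrank_euclideanSpace]
  have ho : Orthonormal ℝ (({Fin.last m} : Set (Fin (m+1))).restrict (fun _ => v)) := by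
    refine ⟨fun i => hv, fun i j hij => ?_⟩
    exact absurd (Subtype.ext (i.2.trans j.2.symm)) hij
  obtain ⟨b, hb⟩ := ho.exists_orthonormalBasis_extension_of_card_eq hfr
  exact ⟨b, hb _ rfl⟩

set_option maxHeartbeats 1000000 in
/-- Interior corkscrew plus exterior volume density implies the lower ADR bound (via the
relative isoperimetric inequality): if `O ⊂ ℝ^{n+1}` is bounded open satisfying the interior
corkscrew condition with constant `c₀`, with `|B(x,r) \ cl O| ≥ c r^{n+1}` for all `x ∈ ∂O`,
`0 < r < diam O`, and `H^n(∂O)` is locally finite, then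
`H^n(B(x,r) ∩ ∂O) ≥ c' r^n` with `c'` depending only on `n, c, c₀`. -/
theorem corkscrew_volume_density_implies_lowerADR (n : ℕ) (c c₀ : ℝ)
    (hc : 0 < c) (hc₀ : 0 < c₀) :
    ∃ c' : ℝ, 0 < c' ∧
      ∀ (O : Set (EuclideanSpace ℝ (Fin (n+1)))),
        IsOpen O → Bornology.IsBounded O → O.Nonempty → (frontier O).Nonempty →
        -- interior corkscrew condition
        (∀ x ∈ frontier O, ∀ r : ℝ, 0 < r → r < Metric.diam O →
          ∃ X, Metric.ball X (c₀ * r) ⊆ Metric.ball x r ∩ O) →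
        -- exterior volume density
        (∀ x ∈ frontier O, ∀ r : ℝ, 0 < r → r < Metric.diam O →
          ENNReal.ofReal (c * r ^ (n+1)) ≤ volume (Metric.ball x r \ closure O)) →
        -- H^n(∂O) locally finite
        (∀ (x : EuclideanSpace ℝ (Fin (n+1))) (r : ℝ),
          μH[(n : ℝ)] (Metric.ball x r ∩ frontier O) ≠ ⊤) →
        ∀ x ∈ frontier O, ∀ r : ℝ, 0 < r → r < Metric.diam O →
          ENNReal.ofReal (c' * r ^ n) ≤ μH[(n : ℝ)] (Metric.ball x r ∩ frontier O) := by
  classical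
  -- the net
  set δ : ℝ := min (c₀/16) (1/2) with hδdef
  have hδ : 0 < δ := lt_min (by positivity) (by norm_num)
  have hδ2 : δ ≤ 1/2 := min_le_right _ _
  have hδc : 2*δ ≤ c₀/8 := by
    have := min_le_left (c₀/16) (1/2)
    simp only [← hδdef] at this
    linarith
  obtain ⟨V, hVne, hVunit, hVnear⟩ := exists_unit_net n hδ hδ2
  set N : ℕ := V.card with hNdef
  have hN : 0 < N := Finset.card_pos.mpr hVne
  have hNpos : (0:ℝ) < (N:ℝ) := by exact_mod_cast hN
  have hc' : 0 < c / (2^(n+1) * (N:ℝ)) := div_pos hc (mul_pos (by positivity) hNpos)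
  refine ⟨c / (2^(n+1) * N), hc', ?_⟩
  intro O hO _hObd _hOne _hfne hcork hvol _hfin x hx r hr hrd
  -- corkscrew ball at scale r/4
  obtain ⟨X, hX⟩ := hcork x hx (r/4) (by linarith) (by linarith)
  set R : ℝ := c₀ * (r/4) with hRdef
  have hR : 0 < R := by positivity
  have hXO : ball X R ⊆ O := fun z hz => (hX hz).2
  have hXx : ball X R ⊆ ball x (r/4) := fun z hz => (hX hz).1
  -- the exterior set at scale r/2
  set E : Set (EuclideanSpace ℝ (Fin (n+1))) := ball x (r/2) \ closure O with hEdef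
  have hEvol : ENNReal.ofReal (c * (r/2)^(n+1)) ≤ volume E :=
    hvol x hx (r/2) (by linarith) (by linarith)
  have hXmem : X ∈ ball x (r/4) := hXx (mem_ball_self hR)
  have hyX : ∀ y ∈ E, R ≤ ‖y - X‖ ∧ ‖y - X‖ ≤ r := by
    intro y hy
    constructor
    · by_contra hlt
      push_neg at hlt
      have : y ∈ ball X R := by rwa [mem_ball, dist_eq_norm]
      exact hy.2 (subset_closure (hXO this))
    · have h1 : dist y x < r/2 := mem_ball.mp hy.1
      have h2 : dist X x < r/4 := mem_ball.mp hXmem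
      have : dist y X ≤ dist y x + dist x X := dist_triangle _ _ _
      rw [dist_comm x X] at this
      rw [← dist_eq_norm]
      linarith
  -- the directional pieces of E
  set Efam : EuclideanSpace ℝ (Fin (n+1)) → Set (EuclideanSpace ℝ (Fin (n+1))) :=
    fun v => {y ∈ E | ‖‖y - X‖⁻¹ • (y - X) - v‖ ≤ 2*δ} with hEfam
  have hcover : E ⊆ ⋃ v ∈ V, Efam v := by
    intro y hy
    have hyR := (hyX y hy).1
    have hy0 : ‖y - X‖ ≠ 0 := ne_of_gt (lt_of_lt_of_le hR hyR)
    have hwu : ‖‖y - X‖⁻¹ • (y - X)‖ = 1 := by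
      rw [norm_smul, norm_inv, norm_norm, inv_mul_cancel₀ hy0]
    obtain ⟨v, hvV, hvnear⟩ := hVnear _ hwu
    exact mem_iUnion₂.mpr ⟨v, hvV, hy, hvnear⟩
  -- pigeonhole
  obtain ⟨v, hvV, hmax⟩ := V.exists_max_image (fun v => volume (Efam v)) hVne
  have hEvN : volume E / N ≤ volume (Efam v) := by
    apply ENNReal.div_le_of_le_mul'
    calc volume E ≤ volume (⋃ w ∈ V, Efam w) := measure_mono hcover
      _ ≤ ∑ w ∈ V, volume (Efam w) := measure_biUnion_finset_le V _
      _ ≤ V.card • volume (Efam v) := Finset.sum_le_card_nsmul V _ _ (fun w hw => hmax w hw)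
      _ = (N : ℝ≥0∞) * volume (Efam v) := by rw [nsmul_eq_mul, hNdef]
  -- adapted basis and projection
  obtain ⟨b, hbv⟩ := exists_adapted_basis n v (hVunit v hvV)
  set f : EuclideanSpace ℝ (Fin (n+1)) → EuclideanSpace ℝ (Fin n) :=
    fun z => dropLast n (b.repr z) with hfdef
  have hfL : LipschitzWith 1 f := by
    have := (lipschitz_dropLast n).comp b.repr.isometry.lipschitz
    rwa [one_mul] at this
  -- crossing points
  have hcross : f '' (Efam v) ⊆ f '' (ball x r ∩ frontier O) := by
    rintro - ⟨y, hy, rfl⟩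
    have hyE : y ∈ E := hy.1
    have hyR := (hyX y hyE).1
    have hyr := (hyX y hyE).2
    have hy0 : ‖y - X‖ ≠ 0 := ne_of_gt (lt_of_lt_of_le hR hyR)
    set Q : EuclideanSpace ℝ (Fin (n+1)) := y - ‖y - X‖ • v with hQdef
    have hQX : Q ∈ ball X R := by
      have h1 : Q - X = ‖y - X‖ • (‖y - X‖⁻¹ • (y - X) - v) := by
        rw [smul_sub, smul_inv_smul₀ hy0, hQdef]; abel
      rw [mem_ball, dist_eq_norm, h1, norm_smul, norm_norm]
      have h2 : ‖‖y - X‖⁻¹ • (y - X) - v‖ ≤ c₀/8 := le_trans hy.2 hδc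
      calc ‖y - X‖ * ‖‖y - X‖⁻¹ • (y - X) - v‖ ≤ r * (c₀/8) := by
            apply mul_le_mul hyr h2 (norm_nonneg _) (by linarith)
        _ < R := by rw [hRdef]; nlinarith
    have hQO : Q ∈ O := hXO hQX
    have hynO : y ∉ O := fun h => hyE.2 (subset_closure h)
    obtain ⟨z, hzseg, hzfr⟩ := exists_frontier_mem_segment hO hynO hQO
    have hzball : z ∈ ball x r := by
      have hy2 : y ∈ ball x (r/2) := hyE.1
      have hQ2 : Q ∈ ball x (r/2) := by
        have := hXx hQX
        rw [mem_ball] at this ⊢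
        linarith
      have := (convex_ball x (r/2)).segment_subset hy2 hQ2 hzseg
      rw [mem_ball] at this ⊢
      linarith
    refine ⟨z, ⟨hzball, hzfr⟩, ?_⟩
    -- f z = f y
    obtain ⟨a', b', ha', hb', hab', hz⟩ := hzseg
    have hzy : z = y + (-(b' * ‖y - X‖)) • v := by
      rw [← hz, hQdef]
      rw [smul_sub, smul_smul]
      have : a' • y + (b' • y - (b' * ‖y - X‖) • v)
          = (a' + b') • y - (b' * ‖y - X‖) • v := by
        rw [add_smul]; abel
      rw [this, hab', one_smul, neg_smul, sub_eq_add_neg]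
    ext j
    show dropLast n (b.repr z) j = dropLast n (b.repr y) j
    rw [hzy]
    have : b.repr (y + (-(b' * ‖y - X‖)) • v)
        = b.repr y + (-(b' * ‖y - X‖)) • b.repr v := by
      rw [map_add, LinearIsometryEquiv.map_smul]
    rw [this, ← hbv, OrthonormalBasis.repr_self]
    simp only [dropLast, PiLp.add_apply, PiLp.smul_apply, EuclideanSpace.single_apply,
      if_neg (Fin.castSucc_lt_last j).ne, smul_eq_mul, mul_zero, add_zero]
  -- slab estimate
  have hslab : volume (Efam v) ≤ ENNReal.ofReal r * volume (f '' Efam v) := by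
    have hA : ∀ z ∈ (⇑b.repr '' Efam v), |z (Fin.last n) - b.repr x (Fin.last n)| ≤ r/2 := by
      rintro - ⟨y, hy, rfl⟩
      have h1 : |(b.repr y - b.repr x) (Fin.last n)| ≤ ‖b.repr y - b.repr x‖ :=
        abs_coord_le_norm _ _ _
      rw [← map_sub] at h1
      rw [b.repr.norm_map] at h1
      have h2 : ‖y - x‖ ≤ r/2 := by
        have := mem_ball.mp hy.1.1
        rw [← dist_eq_norm]; linarith
      have h3 : (b.repr (y - x)) (Fin.last n) = b.repr y (Fin.last n) - b.repr x (Fin.last n) := by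
        rw [map_sub]; rfl
      rw [h3] at h1
      linarith
    have h0 := slab_volume n (⇑b.repr '' Efam v) (b.repr x (Fin.last n)) (r/2) hA
    have h1 : volume (⇑b.repr '' Efam v) = volume (Efam v) := by
      have := image_measure_eq b.measurableEquiv b.measurePreserving_measurableEquiv (Efam v)
      exact this
    have h2 : dropLast n '' (⇑b.repr '' Efam v) = f '' Efam v := by
      rw [← image_comp]; rfl
    rw [h1, h2, show 2*(r/2) = r by ring] at h0
    exact h0
  -- Hausdorff bound
  have hμ : volume (f '' (ball x r ∩ frontier O)) ≤ μH[(n:ℝ)] (ball x r ∩ frontier O) := by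
    refine (volume_le_hausdorff n _).trans ?_
    have := hfL.hausdorffMeasure_image_le (d := (n:ℝ)) (Nat.cast_nonneg n) (ball x r ∩ frontier O)
    simpa using this
  -- combine
  have hr0 : ENNReal.ofReal r ≠ 0 := (ENNReal.ofReal_pos.mpr hr).ne'
  have hrtop : ENNReal.ofReal r ≠ ∞ := ENNReal.ofReal_ne_top
  have hN0 : (N : ℝ≥0∞) ≠ 0 := by exact_mod_cast hN.ne'
  have hNtop : (N : ℝ≥0∞) ≠ ∞ := ENNReal.natCast_ne_top N
  have hchain : volume E / N / ENNReal.ofReal r ≤ μH[(n:ℝ)] (ball x r ∩ frontier O) := by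
    have h1 : volume (Efam v) / ENNReal.ofReal r ≤ volume (f '' Efam v) := by
      exact ENNReal.div_le_of_le_mul' hslab
    calc volume E / N / ENNReal.ofReal r
        ≤ volume (Efam v) / ENNReal.ofReal r :=
          ENNReal.div_le_div_right hEvN _
      _ ≤ volume (f '' Efam v) := h1
      _ ≤ volume (f '' (ball x r ∩ frontier O)) := measure_mono hcross
      _ ≤ μH[(n:ℝ)] (ball x r ∩ frontier O) := hμ
  refine le_trans ?_ hchain
  rw [ENNReal.le_div_iff_mul_le (Or.inl hr0) (Or.inl hrtop),
    ENNReal.le_div_iff_mul_le (Or.inl hN0) (Or.inl hNtop)]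
  refine le_trans (le_of_eq ?_) hEvol
  have hNpos' : (0:ℝ) < (N:ℝ) := by exact_mod_cast hN
  have h1 : (0:ℝ) ≤ c / (2^(n+1) * (N:ℝ)) * r^n :=
    mul_nonneg (le_of_lt (div_pos hc (mul_pos (by positivity) hNpos'))) (pow_nonneg hr.le n)
  have h2 : (0:ℝ) ≤ c / (2^(n+1) * (N:ℝ)) * r^n * r := mul_nonneg h1 hr.le
  have hNne : (N:ℝ) ≠ 0 := ne_of_gt hNpos'
  have key : c / (2^(n+1) * (N:ℝ)) * r^n * r * (N:ℝ) = c*(r/2)^(n+1) := by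
    clear_value N
    clear! δ V O X E R Efam v b f
    field_simp
    rw [← mul_pow]
    ring
  rw [← ENNReal.ofReal_natCast N, ← ENNReal.ofReal_mul h1, ← ENNReal.ofReal_mul h2, key]
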